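/- arXiv:1601.00938 — 3 statements merged into one kernel-verified Lean document; each statement's English description precedes it below -/
import Mathlib

section
/- Let w be a nonnegative locally integrable function on ℝ. If for some 0 < ε < 1 and all real numbers a < b < c and all measurable sets E ⊆ (a,b) one has w(E)/w(a,c) ≤ 2 (|E|/(c-b))^{ε/(1+ε)}, then for all a < b < c the one-sided reverse Hölder inequality (c-b)^{ε/2} ∫_a^b w^{1+ε/2} ≤ 6 (∫_a^c w)^{1+ε/2} holds. -/
open MeasureTheory Set

noncomputable def Mplus (f : ℝ → ℝ) (x : ℝ) : ℝ :=
  ⨆ h : {h : ℝ // 0 < h}, (h.1)⁻¹ * ∫ t in x..(x + h.1), |f t|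

noncomputable def Mminus (f : ℝ → ℝ) (x : ℝ) : ℝ :=
  ⨆ h : {h : ℝ // 0 < h}, (h.1)⁻¹ * ∫ t in (x - h.1)..x, |f t|

noncomputable def halo (γ : ℝ) (E : Set ℝ) : Set ℝ :=
  {x | γ < Mplus (E.indicator fun _ => (1:ℝ)) x}

noncomputable def wsize (w : ℝ → ℝ) (E : Set ℝ) : ENNReal :=
  ∫⁻ x in E, ENNReal.ofReal (w x)

noncomputable def tauber (w : ℝ → ℝ) (α : ℝ) : ENNReal :=
  ⨆ E : {E : Set ℝ // MeasurableSet E ∧ 0 < wsize w E ∧ wsize w E < ⊤},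
    wsize w (halo α E.1) / wsize w E.1

set_option maxHeartbeats 2000000 in
theorem stmt3 (w : ℝ → ℝ) (hw : ∀ x, 0 ≤ w x) (hloc : LocallyIntegrable w volume)
    (ε : ℝ) (hε0 : 0 < ε) (hε1 : ε < 1)
    (h : ∀ a b c : ℝ, a < b → b < c → ∀ E : Set ℝ, MeasurableSet E → E ⊆ Ioo a b →
      ∫ x in E, w x ≤ 2 * ((volume E).toReal / (c - b)) ^ (ε / (1 + ε)) * ∫ x in Ioo a c, w x) :
    ∀ a b c : ℝ, a < b → b < c →
      (c - b) ^ (ε / 2) * ∫ x in Ioo a b, w x ^ (1 + ε / 2)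
        ≤ 6 * (∫ x in Ioo a c, w x) ^ (1 + ε / 2) := by
  intro a b c hab hbc
  have hac : a < c := hab.trans hbc
  -- a measurable nonnegative representative of w
  have hwmeas : AEMeasurable w volume := hloc.aestronglyMeasurable.aemeasurable
  set g : ℝ → ℝ := fun x => max (hwmeas.mk w x) 0 with hgdef
  have hgm : Measurable g := hwmeas.measurable_mk.max measurable_const
  have hgnn : ∀ x, 0 ≤ g x := fun x => le_max_right _ _
  have hg : w =ᵐ[volume] g := by
    filter_upwards [hwmeas.ae_eq_mk] with x hx
    simp [hgdef, ← hx, max_eq_left (hw x)]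
  have hwI : IntegrableOn w (Ioo a c) volume :=
    (hloc.integrableOn_isCompact isCompact_Icc).mono_set Ioo_subset_Icc_self
  have hgI : IntegrableOn g (Ioo a c) volume := hwI.congr (ae_restrict_of_ae hg)
  set W := ∫ x in Ioo a c, g x with hWdef
  have hWw : ∫ x in Ioo a c, w x = W := integral_congr_ae (ae_restrict_of_ae hg)
  have hWnn : 0 ≤ W := setIntegral_nonneg measurableSet_Ioo fun x _ => hgnn x
  have hp0 : (0:ℝ) < 1 + ε / 2 := by linarith
  rw [hWw]
  rcases eq_or_lt_of_le hWnn with hW0 | hWpos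
  · -- degenerate case W = 0 : w vanishes a.e. on (a,c)
    have hwz : w =ᵐ[volume.restrict (Ioo a c)] 0 := by
      refine (integral_eq_zero_iff_of_nonneg_ae (ae_of_all _ hw) hwI).mp ?_
      rw [hWw, ← hW0]
    have hwz' : w =ᵐ[volume.restrict (Ioo a b)] 0 :=
      ae_restrict_of_ae_restrict_of_subset (Ioo_subset_Ioo_right hbc.le) hwz
    have : ∫ x in Ioo a b, w x ^ (1 + ε / 2) = 0 := by
      rw [integral_congr_ae (g := fun _ => (0:ℝ))]
      · simp
      · filter_upwards [hwz'] with x hx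
        simp only [Pi.zero_apply] at hx
        rw [hx, Real.zero_rpow hp0.ne']
    rw [this, ← hW0, Real.zero_rpow hp0.ne']
    simp
  -- main case W > 0
  set δ := c - b with hδdef
  have hδ0 : 0 < δ := sub_pos.mpr hbc
  set lam0 := W / δ with hlam0def
  have hlam00 : 0 < lam0 := div_pos hWpos hδ0
  have hε1' : (0:ℝ) < 1 + ε := by linarith
  -- the distribution function and its elementary bounds
  have hlevel : ∀ lam : ℝ, MeasurableSet ({x | lam < g x} ∩ Ioo a b) := fun lam =>
    (measurableSet_lt measurable_const hgm).inter measurableSet_Ioo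
  set φ : ℝ → ℝ := fun lam => ∫ x in {x | lam < g x} ∩ Ioo a b, g x with hφdef
  have hEsub : ∀ lam : ℝ, {x | lam < g x} ∩ Ioo a b ⊆ Ioo a c := fun lam =>
    inter_subset_right.trans (Ioo_subset_Ioo_right hbc.le)
  have hφnn : ∀ lam, 0 ≤ φ lam := fun lam =>
    setIntegral_nonneg (hlevel lam) fun x _ => hgnn x
  have hφW : ∀ lam, φ lam ≤ W := by
    intro lam
    exact setIntegral_mono_set hgI (ae_of_all _ hgnn)
      (HasSubset.Subset.eventuallyLE (hEsub lam))
  set C := 2 ^ (1 + ε) * W ^ (1 + ε) * δ ^ (-ε) with hCdef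
  have hCnn : 0 ≤ C := by positivity
  have key : ∀ lam : ℝ, 0 < lam → φ lam ≤ C * lam ^ (-ε) := by
    intro lam hlam
    set E := {x | lam < g x} ∩ Ioo a b with hEdef
    have hEm : MeasurableSet E := hlevel lam
    have hEfin : volume E ≠ ⊤ :=
      ((measure_mono (hEsub lam)).trans_lt measure_Ioo_lt_top).ne
    set m := (volume E).toReal with hmdef
    have hmnn : 0 ≤ m := ENNReal.toReal_nonneg
    have hgIE : IntegrableOn g E volume := hgI.mono_set (hEsub lam)
    have cheb : lam * m ≤ φ lam :=
      setIntegral_ge_of_const_le_real hEm hEfin (fun x hx => (hx.1 : lam < g x).le) hgIE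
    have hyp : φ lam ≤ 2 * (m / δ) ^ (ε / (1 + ε)) * W := by
      have h2 := h a b c hab hbc E hEm inter_subset_right
      rwa [integral_congr_ae (ae_restrict_of_ae hg), hWw] at h2
    rcases eq_or_lt_of_le (hφnn lam) with h0 | hφpos
    · rw [← h0]; positivity
    have hu : 0 < lam * δ := by positivity
    have step1 : m / δ ≤ φ lam / (lam * δ) := by
      rw [div_le_div_iff₀ hδ0 hu]
      nlinarith
    have step2 : φ lam ≤ 2 * (φ lam / (lam * δ)) ^ (ε / (1 + ε)) * W := by
      refine hyp.trans ?_
      have hmono : (m / δ) ^ (ε / (1 + ε)) ≤ (φ lam / (lam * δ)) ^ (ε / (1 + ε)) :=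
        Real.rpow_le_rpow (div_nonneg hmnn hδ0.le) step1 (by positivity)
      nlinarith [Real.rpow_nonneg (div_nonneg hmnn hδ0.le) (ε / (1 + ε))]
    have hθ : (0:ℝ) < ε / (1 + ε) := by positivity
    have step3 : φ lam ^ (1 - ε / (1 + ε)) ≤ 2 * W / (lam * δ) ^ (ε / (1 + ε)) := by
      have hden : 0 < (lam * δ) ^ (ε / (1 + ε)) := Real.rpow_pos_of_pos hu _
      have hφθ : 0 < φ lam ^ (ε / (1 + ε)) := Real.rpow_pos_of_pos hφpos _
      rw [Real.rpow_sub hφpos, Real.rpow_one, div_le_div_iff₀ hφθ hden]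
      rw [Real.div_rpow (hφnn lam) hu.le] at step2
      calc φ lam * (lam * δ) ^ (ε / (1 + ε))
          ≤ (2 * (φ lam ^ (ε / (1 + ε)) / (lam * δ) ^ (ε / (1 + ε))) * W) *
              (lam * δ) ^ (ε / (1 + ε)) := by
            exact mul_le_mul_of_nonneg_right step2 hden.le
        _ = 2 * W * φ lam ^ (ε / (1 + ε)) := by field_simp
    have hexp1 : (1 - ε / (1 + ε)) * (1 + ε) = 1 := by field_simp; ring
    have hexp2 : ε / (1 + ε) * (1 + ε) = ε := by field_simp
    have final : φ lam ≤ (2 * W / (lam * δ) ^ (ε / (1 + ε))) ^ (1 + ε) := by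
      calc φ lam = (φ lam ^ (1 - ε / (1 + ε))) ^ (1 + ε) := by
            rw [← Real.rpow_mul (hφnn lam), hexp1, Real.rpow_one]
        _ ≤ _ := Real.rpow_le_rpow (Real.rpow_nonneg (hφnn lam) _) step3 (by linarith)
    refine final.trans (le_of_eq ?_)
    have hA : ((lam * δ) ^ (ε / (1 + ε))) ^ (1 + ε) = (lam * δ) ^ ε := by
      rw [← Real.rpow_mul hu.le, hexp2]
    rw [Real.div_rpow (by positivity : (0:ℝ) ≤ 2 * W) (Real.rpow_nonneg hu.le _), hA,
      Real.mul_rpow (by norm_num : (0:ℝ) ≤ 2) hWnn, hCdef,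
      Real.mul_rpow hlam.le hδ0.le,
      Real.rpow_neg hlam.le, Real.rpow_neg hδ0.le]
    field_simp
  -- layer cake
  set ν := (volume.restrict (Ioo a b)).withDensity (fun x => ENNReal.ofReal (g x))
    with hνdef
  have hq0 : (0:ℝ) < ε / 2 := by positivity
  have layer := lintegral_rpow_eq_lintegral_meas_lt_mul ν (ae_of_all _ hgnn)
    hgm.aemeasurable hq0
  have hLν : ∫⁻ x in Ioo a b, ENNReal.ofReal (g x ^ (1 + ε / 2))
      = ∫⁻ x, ENNReal.ofReal (g x ^ (ε / 2)) ∂ν := by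
    rw [hνdef, lintegral_withDensity_eq_lintegral_mul _ hgm.ennreal_ofReal
      ((hgm.pow measurable_const).ennreal_ofReal)]
    refine lintegral_congr fun x => ?_
    simp only [Pi.mul_apply]
    rw [← ENNReal.ofReal_mul (hgnn x)]
    congr 1
    rw [Real.rpow_add' (hgnn x) (by positivity), Real.rpow_one]
  have hmeasν : ∀ t : ℝ, ν {x | t < g x} = ENNReal.ofReal (φ t) := by
    intro t
    rw [hνdef, withDensity_apply _ (measurableSet_lt measurable_const hgm),
      Measure.restrict_restrict (measurableSet_lt measurable_const hgm)]
    exact (ofReal_integral_eq_lintegral_ofReal (hgI.mono_set (hEsub t))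
      (ae_of_all _ hgnn)).symm
  -- bound the two pieces of the t-integral
  have hI1 : ∫⁻ t in Ioc 0 lam0, ν {x | t < g x} * ENNReal.ofReal (t ^ (ε / 2 - 1))
      ≤ ENNReal.ofReal (W * lam0 ^ (ε / 2) / (ε / 2)) := by
    have hb1 : ∫⁻ t in Ioc 0 lam0, ν {x | t < g x} * ENNReal.ofReal (t ^ (ε / 2 - 1))
        ≤ ∫⁻ t in Ioc 0 lam0, ENNReal.ofReal W * ENNReal.ofReal (t ^ (ε / 2 - 1)) := by
      refine lintegral_mono_ae ?_
      filter_upwards [self_mem_ae_restrict measurableSet_Ioc] with t ht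
      rw [hmeasν t]
      exact mul_le_mul_left (ENNReal.ofReal_le_ofReal (hφW t)) _
    refine hb1.trans ?_
    rw [lintegral_const_mul' _ _ ENNReal.ofReal_ne_top]
    have hint : IntegrableOn (fun t : ℝ => t ^ (ε / 2 - 1)) (Ioc 0 lam0) volume := by
      have := intervalIntegral.intervalIntegrable_rpow'
        (a := 0) (b := lam0) (r := ε / 2 - 1) (by linarith)
      rwa [intervalIntegrable_iff_integrableOn_Ioc_of_le hlam00.le] at this
    have hnn : 0 ≤ᵐ[volume.restrict (Ioc 0 lam0)] fun t : ℝ => t ^ (ε / 2 - 1) := by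
      filter_upwards [self_mem_ae_restrict measurableSet_Ioc] with t ht
      exact Real.rpow_nonneg ht.1.le _
    rw [← ofReal_integral_eq_lintegral_ofReal hint hnn]
    have hval : ∫ t in Ioc 0 lam0, t ^ (ε / 2 - 1) = lam0 ^ (ε / 2) / (ε / 2) := by
      rw [← intervalIntegral.integral_of_le hlam00.le,
        integral_rpow (Or.inl (by linarith : (-1:ℝ) < ε / 2 - 1))]
      rw [Real.zero_rpow (ne_of_gt (by linarith))]
      norm_num
    rw [hval, ← ENNReal.ofReal_mul hWnn, mul_div_assoc]
  have hI2 : ∫⁻ t in Ioi lam0, ν {x | t < g x} * ENNReal.ofReal (t ^ (ε / 2 - 1))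
      ≤ ENNReal.ofReal (C * (lam0 ^ (-(ε / 2)) / (ε / 2))) := by
    have hb1 : ∫⁻ t in Ioi lam0, ν {x | t < g x} * ENNReal.ofReal (t ^ (ε / 2 - 1))
        ≤ ∫⁻ t in Ioi lam0, ENNReal.ofReal C * ENNReal.ofReal (t ^ (ε / 2 - 1 - ε)) := by
      refine lintegral_mono_ae ?_
      filter_upwards [self_mem_ae_restrict measurableSet_Ioi] with t ht
      have ht0 : 0 < t := hlam00.trans ht
      rw [hmeasν t]
      calc ENNReal.ofReal (φ t) * ENNReal.ofReal (t ^ (ε / 2 - 1))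
          ≤ ENNReal.ofReal (C * t ^ (-ε)) * ENNReal.ofReal (t ^ (ε / 2 - 1)) :=
            mul_le_mul_left (ENNReal.ofReal_le_ofReal (key t ht0)) _
        _ = ENNReal.ofReal C * ENNReal.ofReal (t ^ (ε / 2 - 1 - ε)) := by
            rw [ENNReal.ofReal_mul hCnn, mul_assoc, ← ENNReal.ofReal_mul
              (Real.rpow_nonneg ht0.le _), ← Real.rpow_add ht0]
            ring_nf
    refine hb1.trans ?_
    rw [lintegral_const_mul' _ _ ENNReal.ofReal_ne_top]
    have hlt : ε / 2 - 1 - ε < -1 := by linarith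
    have hint : IntegrableOn (fun t : ℝ => t ^ (ε / 2 - 1 - ε)) (Ioi lam0) volume :=
      integrableOn_Ioi_rpow_of_lt hlt hlam00
    have hnn : 0 ≤ᵐ[volume.restrict (Ioi lam0)] fun t : ℝ => t ^ (ε / 2 - 1 - ε) := by
      filter_upwards [self_mem_ae_restrict measurableSet_Ioi] with t ht
      exact Real.rpow_nonneg (hlam00.trans ht).le _
    rw [← ofReal_integral_eq_lintegral_ofReal hint hnn]
    have hval : ∫ t in Ioi lam0, t ^ (ε / 2 - 1 - ε) = lam0 ^ (-(ε / 2)) / (ε / 2) := by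
      rw [integral_Ioi_rpow_of_lt hlt hlam00]
      have : ε / 2 - 1 - ε + 1 = -(ε / 2) := by ring
      rw [this]
      field_simp
    rw [hval, ← ENNReal.ofReal_mul hCnn]
  -- assemble the bound on the lintegral
  set R := W * lam0 ^ (ε / 2) + C * lam0 ^ (-(ε / 2)) with hRdef
  have hRnn : 0 ≤ R := by positivity
  have hLbound : ∫⁻ x in Ioo a b, ENNReal.ofReal (g x ^ (1 + ε / 2))
      ≤ ENNReal.ofReal R := by
    rw [hLν, layer]
    have hsplit : (Ioi (0:ℝ)) = Ioc 0 lam0 ∪ Ioi lam0 :=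
      (Ioc_union_Ioi_eq_Ioi hlam00.le).symm
    rw [hsplit, lintegral_union measurableSet_Ioi (Ioc_disjoint_Ioi le_rfl)]
    calc ENNReal.ofReal (ε / 2) *
          ((∫⁻ t in Ioc 0 lam0, ν {x | t < g x} * ENNReal.ofReal (t ^ (ε / 2 - 1)))
            + ∫⁻ t in Ioi lam0, ν {x | t < g x} * ENNReal.ofReal (t ^ (ε / 2 - 1)))
        ≤ ENNReal.ofReal (ε / 2) *
            (ENNReal.ofReal (W * lam0 ^ (ε / 2) / (ε / 2))
              + ENNReal.ofReal (C * (lam0 ^ (-(ε / 2)) / (ε / 2)))) := by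
          exact mul_le_mul_right (add_le_add hI1 hI2) _
      _ = ENNReal.ofReal R := by
          rw [← ENNReal.ofReal_add (by positivity) (by positivity),
            ← ENNReal.ofReal_mul hq0.le]
          congr 1
          field_simp [hRdef]
          ring
  -- evaluate R
  have hRval : R = (1 + 2 ^ (1 + ε)) * (W ^ (1 + ε / 2) * δ ^ (-(ε / 2))) := by
    have e1 : lam0 ^ (ε / 2) = W ^ (ε / 2) * δ ^ (-(ε / 2)) := by
      rw [hlam0def, Real.div_rpow hWnn hδ0.le, Real.rpow_neg hδ0.le, div_eq_mul_inv]
    have e2 : lam0 ^ (-(ε / 2)) = W ^ (-(ε / 2)) * δ ^ (ε / 2) := by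
      rw [hlam0def, Real.rpow_neg (div_nonneg hWnn hδ0.le),
        Real.div_rpow hWnn hδ0.le, inv_div, Real.rpow_neg hWnn]
      ring
    have f1 : W * W ^ (ε / 2) = W ^ (1 + ε / 2) := by
      rw [Real.rpow_add hWpos, Real.rpow_one]
    have f2 : W ^ (1 + ε) * W ^ (-(ε / 2)) = W ^ (1 + ε / 2) := by
      rw [← Real.rpow_add hWpos]
      congr 1
      ring
    have f3 : δ ^ (-ε) * δ ^ (ε / 2) = δ ^ (-(ε / 2)) := by
      rw [← Real.rpow_add hδ0]
      congr 1
      ring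
    have expand : R = W * W ^ (ε / 2) * δ ^ (-(ε / 2))
        + 2 ^ (1 + ε) * (W ^ (1 + ε) * W ^ (-(ε / 2))) * (δ ^ (-ε) * δ ^ (ε / 2)) := by
      rw [hRdef, e1, e2, hCdef]; ring
    rw [expand, f1, f2, f3]; ring
  -- back from g to w and from the lintegral to the Bochner integral
  have hLw : ∫⁻ x in Ioo a b, ENNReal.ofReal (w x ^ (1 + ε / 2))
      = ∫⁻ x in Ioo a b, ENNReal.ofReal (g x ^ (1 + ε / 2)) := by
    refine lintegral_congr_ae ?_
    filter_upwards [ae_restrict_of_ae hg] with x hx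
    rw [hx]
  have hInt : IntegrableOn (fun x => w x ^ (1 + ε / 2)) (Ioo a b) volume := by
    refine ⟨?_, ?_⟩
    · refine AEStronglyMeasurable.congr (f := fun x => g x ^ (1 + ε / 2))
        ((hgm.pow measurable_const).aestronglyMeasurable) ?_
      filter_upwards [ae_restrict_of_ae hg] with x hx
      rw [hx]
    · rw [hasFiniteIntegral_iff_ofReal
        (ae_of_all _ fun x => Real.rpow_nonneg (hw x) _)]
      exact (hLw.trans_le hLbound).trans_lt ENNReal.ofReal_lt_top
  have hle : ∫ x in Ioo a b, w x ^ (1 + ε / 2) ≤ R := by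
    have h1 : ENNReal.ofReal (∫ x in Ioo a b, w x ^ (1 + ε / 2))
        = ∫⁻ x in Ioo a b, ENNReal.ofReal (w x ^ (1 + ε / 2)) :=
      ofReal_integral_eq_lintegral_ofReal hInt
        (ae_of_all _ fun x => Real.rpow_nonneg (hw x) _)
    refine (ENNReal.ofReal_le_ofReal_iff hRnn).mp ?_
    rw [h1, hLw]
    exact hLbound
  have h4 : (2:ℝ) ^ (1 + ε) ≤ 4 := by
    have h42 : (2:ℝ) ^ (2:ℝ) = 4 := by
      rw [show (2:ℝ) = ((2:ℕ):ℝ) by norm_num, Real.rpow_natCast]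
      norm_num
    calc (2:ℝ) ^ (1 + ε) ≤ 2 ^ (2:ℝ) :=
          Real.rpow_le_rpow_of_exponent_le one_le_two (by linarith)
      _ = 4 := h42
  have hδδ : δ ^ (ε / 2) * δ ^ (-(ε / 2)) = 1 := by
    rw [← Real.rpow_add hδ0]
    norm_num
  calc δ ^ (ε / 2) * ∫ x in Ioo a b, w x ^ (1 + ε / 2)
      ≤ δ ^ (ε / 2) * R :=
        mul_le_mul_of_nonneg_left hle (Real.rpow_nonneg hδ0.le _)
    _ = (1 + 2 ^ (1 + ε)) * W ^ (1 + ε / 2) := by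
        rw [hRval]
        calc δ ^ (ε / 2) * ((1 + 2 ^ (1 + ε)) * (W ^ (1 + ε / 2) * δ ^ (-(ε / 2))))
            = (1 + 2 ^ (1 + ε)) * W ^ (1 + ε / 2) * (δ ^ (ε / 2) * δ ^ (-(ε / 2))) := by
              ring
          _ = (1 + 2 ^ (1 + ε)) * W ^ (1 + ε / 2) := by rw [hδδ]; ring
    _ ≤ 6 * W ^ (1 + ε / 2) := by
        have hWp : 0 ≤ W ^ (1 + ε / 2) := Real.rpow_nonneg hWnn _
        nlinarith
end

section
/- Let E ⊆ ℝ be measurable and 0 < λ < α < 1. Define the halo H⁺_λ(E) = {x ∈ ℝ : M⁺1_E(x) > λ}. Then H⁺_λ(E) ⊆ H⁺_{λ/α}(H⁺_α(E)). -/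
open MeasureTheory Set

/-- measure of `S` in the interval `(a,b]`, as a real number -/
noncomputable def mE (S : Set ℝ) (a b : ℝ) : ℝ := (volume (S ∩ Set.Ioc a b)).toReal

lemma mE_nonneg (S : Set ℝ) (a b : ℝ) : 0 ≤ mE S a b := ENNReal.toReal_nonneg

lemma vol_ne_top (S : Set ℝ) (a b : ℝ) : volume (S ∩ Set.Ioc a b) ≠ ⊤ := by
  refine ne_top_of_le_ne_top ?_ (measure_mono inter_subset_right)
  simp [Real.volume_Ioc]

lemma mE_le (S : Set ℝ) {a b : ℝ} (h : a ≤ b) : mE S a b ≤ b - a := by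
  have := measure_mono (inter_subset_right (s := S) (t := Set.Ioc a b)) (μ := volume)
  have h2 : (volume (S ∩ Set.Ioc a b)).toReal ≤ (volume (Set.Ioc a b)).toReal :=
    ENNReal.toReal_mono (by simp [Real.volume_Ioc]) this
  simpa [mE, Real.volume_Ioc, ENNReal.toReal_ofReal (sub_nonneg.2 h)] using h2

lemma integral_eval {S : Set ℝ} (hS : MeasurableSet S) {a b : ℝ} (hab : a ≤ b) :
    (∫ t in a..b, |S.indicator (fun _ => (1:ℝ)) t|) = mE S a b := by
  have habs : (fun t => |S.indicator (fun _ => (1:ℝ)) t|) = S.indicator (fun _ => (1:ℝ)) := by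
    funext t
    exact abs_of_nonneg (Set.indicator_nonneg (fun _ _ => zero_le_one) t)
  rw [habs, intervalIntegral.integral_of_le hab, MeasureTheory.integral_indicator hS,
    setIntegral_const, measureReal_restrict_apply hS]
  simp [mE, Measure.real]

lemma bdd_range {S : Set ℝ} (hS : MeasurableSet S) (x : ℝ) :
    BddAbove (Set.range (fun h : {h : ℝ // 0 < h} =>
      (h.1)⁻¹ * ∫ t in x..(x + h.1), |S.indicator (fun _ => (1:ℝ)) t|)) := by
  refine ⟨1, ?_⟩
  rintro v ⟨⟨h, hpos⟩, rfl⟩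
  simp only
  rw [integral_eval hS (by linarith)]
  have h1 : mE S x (x + h) ≤ h := by simpa using mE_le S (a := x) (b := x + h) (by linarith)
  calc h⁻¹ * mE S x (x + h) ≤ h⁻¹ * h :=
        mul_le_mul_of_nonneg_left h1 (by positivity)
    _ = 1 := by field_simp

lemma term_le_Mplus {S : Set ℝ} (hS : MeasurableSet S) (x : ℝ) {h : ℝ} (hpos : 0 < h) :
    h⁻¹ * mE S x (x + h) ≤ Mplus (S.indicator fun _ => (1:ℝ)) x := by
  have := le_ciSup (bdd_range hS x) (⟨h, hpos⟩ : {h : ℝ // 0 < h})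
  rwa [integral_eval hS (by linarith)] at this

lemma mem_halo_iff {S : Set ℝ} (hS : MeasurableSet S) {γ x : ℝ} :
    x ∈ halo γ S ↔ ∃ h, 0 < h ∧ γ * h < mE S x (x + h) := by
  constructor
  · intro hx
    simp only [halo, Mplus, mem_setOf_eq] at hx
    obtain ⟨⟨h, hpos⟩, hlt⟩ := exists_lt_of_lt_ciSup hx
    rw [integral_eval hS (by linarith)] at hlt
    simp only at hlt
    exact ⟨h, hpos, by rw [mul_comm]; exact (lt_inv_mul_iff₀ hpos).1 hlt⟩
  · rintro ⟨h, hpos, hlt⟩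
    have h1 : γ < h⁻¹ * mE S x (x + h) := by
      rw [lt_inv_mul_iff₀ hpos, mul_comm]
      exact hlt
    simp only [halo, mem_setOf_eq]
    exact lt_of_lt_of_le h1 (term_le_Mplus hS x hpos)

lemma mE_mono_left {S : Set ℝ} {y x' c : ℝ} (h : y ≤ x') : mE S x' c ≤ mE S y c :=
  ENNReal.toReal_mono (vol_ne_top _ _ _)
    (measure_mono (inter_subset_inter_right _ (Ioc_subset_Ioc_left h)))

lemma mE_mono_right {S : Set ℝ} {a b1 b2 : ℝ} (h : b1 ≤ b2) : mE S a b1 ≤ mE S a b2 :=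
  ENNReal.toReal_mono (vol_ne_top _ _ _)
    (measure_mono (inter_subset_inter_right _ (Ioc_subset_Ioc_right h)))

lemma mE_subset_mono {S T : Set ℝ} {a b : ℝ} (h : S ⊆ T) : mE S a b ≤ mE T a b :=
  ENNReal.toReal_mono (vol_ne_top _ _ _) (measure_mono (inter_subset_inter_left _ h))

lemma mE_right_lip {S : Set ℝ} {x y1 y2 : ℝ} (h : y1 ≤ y2) :
    mE S x y2 ≤ mE S x y1 + (y2 - y1) := by
  have hsub : S ∩ Set.Ioc x y2 ⊆ (S ∩ Set.Ioc x y1) ∪ Set.Ioc y1 y2 := by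
    rintro t ⟨htS, ht1, ht2⟩
    rcases le_or_gt t y1 with h' | h'
    · exact Or.inl ⟨htS, ht1, h'⟩
    · exact Or.inr ⟨h', ht2⟩
  have := (measure_mono (μ := volume) hsub).trans (measure_union_le _ _)
  have h2 := ENNReal.toReal_mono (by
      refine ENNReal.add_ne_top.2 ⟨vol_ne_top _ _ _, ?_⟩
      simp [Real.volume_Ioc]) this
  rw [ENNReal.toReal_add (vol_ne_top _ _ _) (by simp [Real.volume_Ioc])] at h2
  simpa [mE, Real.volume_Ioc, ENNReal.toReal_ofReal (sub_nonneg.2 h)] using h2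

lemma mE_left_lip {S : Set ℝ} {x y c : ℝ} (h : x ≤ y) :
    mE S x c ≤ mE S y c + (y - x) := by
  have hsub : S ∩ Set.Ioc x c ⊆ (S ∩ Set.Ioc y c) ∪ Set.Ioc x y := by
    rintro t ⟨htS, ht1, ht2⟩
    rcases le_or_gt t y with h' | h'
    · exact Or.inr ⟨ht1, h'⟩
    · exact Or.inl ⟨htS, h', ht2⟩
  have := (measure_mono (μ := volume) hsub).trans (measure_union_le _ _)
  have h2 := ENNReal.toReal_mono (by
      refine ENNReal.add_ne_top.2 ⟨vol_ne_top _ _ _, ?_⟩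
      simp [Real.volume_Ioc]) this
  rw [ENNReal.toReal_add (vol_ne_top _ _ _) (by simp [Real.volume_Ioc])] at h2
  simpa [mE, Real.volume_Ioc, ENNReal.toReal_ofReal (sub_nonneg.2 h)] using h2

lemma mE_add {S : Set ℝ} (hS : MeasurableSet S) {x a c : ℝ} (h1 : x ≤ a) (h2 : a ≤ c) :
    mE S x c = mE S x a + mE S a c := by
  have hIoc : Set.Ioc x c = Set.Ioc x a ∪ Set.Ioc a c := (Set.Ioc_union_Ioc_eq_Ioc h1 h2).symm
  have hdisj : Disjoint (S ∩ Set.Ioc x a) (S ∩ Set.Ioc a c) := by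
    refine Set.disjoint_left.2 ?_
    rintro t ⟨_, _, ht1⟩ ⟨_, ht2, _⟩
    exact absurd ht2 (not_lt.2 ht1)
  have hvol : volume (S ∩ Set.Ioc x c) = volume (S ∩ Set.Ioc x a) + volume (S ∩ Set.Ioc a c) := by
    rw [hIoc, Set.inter_union_distrib_left]
    exact measure_union hdisj (hS.inter measurableSet_Ioc)
  rw [mE, hvol, ENNReal.toReal_add (vol_ne_top _ _ _) (vol_ne_top _ _ _)]
  rfl

lemma continuous_mE (S : Set ℝ) (x : ℝ) : Continuous (fun y => mE S x y) := by
  have : LipschitzWith 1 (fun y => mE S x y) := by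
    refine LipschitzWith.of_dist_le_mul ?_
    intro y1 y2
    rw [NNReal.coe_one, one_mul, Real.dist_eq, Real.dist_eq]
    rcases le_total y1 y2 with h | h
    · have h1 := mE_mono_right (S := S) (a := x) h
      have h2 := mE_right_lip (S := S) (x := x) h
      rw [abs_of_nonpos (by linarith : mE S x y1 - mE S x y2 ≤ 0),
        abs_of_nonpos (by linarith : y1 - y2 ≤ 0)]
      linarith
    · have h1 := mE_mono_right (S := S) (a := x) h
      have h2 := mE_right_lip (S := S) (x := x) h
      rw [abs_of_nonneg (by linarith : 0 ≤ mE S x y1 - mE S x y2),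
        abs_of_nonneg (by linarith : 0 ≤ y1 - y2)]
      linarith
  exact this.continuous

lemma isOpen_halo {S : Set ℝ} (hS : MeasurableSet S) {γ : ℝ} (hγ0 : 0 < γ) (hγ1 : γ < 1) :
    IsOpen (halo γ S) := by
  rw [Metric.isOpen_iff]
  intro x hx
  obtain ⟨h0, h0pos, hlt⟩ := (mem_halo_iff hS).1 hx
  set ε := mE S x (x + h0) - γ * h0 with hε
  have hεpos : 0 < ε := by linarith
  have h1γ : 0 < 1 - γ := by linarith
  set δ := min h0 (min (ε / γ) (ε / (1 - γ))) / 2 with hδ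
  have hδpos : 0 < δ := by
    have : 0 < min h0 (min (ε / γ) (ε / (1 - γ))) :=
      lt_min h0pos (lt_min (by positivity) (by positivity))
    positivity
  have hδh0 : δ ≤ h0 / 2 := by
    rw [hδ]
    gcongr
    exact min_le_left _ _
  have hδa : δ ≤ ε / γ / 2 := by
    rw [hδ]
    gcongr
    exact le_trans (min_le_right _ _) (min_le_left _ _)
  have hδb : δ ≤ ε / (1 - γ) / 2 := by
    rw [hδ]
    gcongr
    exact le_trans (min_le_right _ _) (min_le_right _ _)
  refine ⟨δ, hδpos, ?_⟩
  intro y hy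
  rw [Metric.mem_ball, Real.dist_eq] at hy
  have habs1 : y - x < δ := lt_of_le_of_lt (le_abs_self _) hy
  have habs2 : x - y < δ := by
    have := lt_of_le_of_lt (neg_le_abs (y - x)) hy
    linarith
  have h'pos : 0 < x + h0 - y := by linarith
  refine (mem_halo_iff hS).2 ⟨x + h0 - y, h'pos, ?_⟩
  have hy' : y + (x + h0 - y) = x + h0 := by ring
  rw [hy']
  rcases le_total y x with hc | hc
  · have hmono : mE S x (x + h0) ≤ mE S y (x + h0) := mE_mono_left hc
    have key : γ * (x - y) < ε := by
      have h2 : γ * (x - y) < γ * δ := by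
        rcases eq_or_lt_of_le hc with rfl | hc'
        · simpa using mul_pos hγ0 hδpos
        · exact (mul_lt_mul_iff_right₀ hγ0).2 habs2
      have h3 : γ * (ε / γ / 2) = ε / 2 := by field_simp
      nlinarith [mul_le_mul_of_nonneg_left hδa hγ0.le]
    nlinarith
  · have hlip : mE S x (x + h0) ≤ mE S y (x + h0) + (y - x) := mE_left_lip hc
    have key : (1 - γ) * (y - x) < ε := by
      have h2 : (1 - γ) * (y - x) ≤ (1 - γ) * δ := by
        apply mul_le_mul_of_nonneg_left (le_of_lt habs1) h1γ.le
      have h3 : (1 - γ) * (ε / (1 - γ) / 2) = ε / 2 := by field_simp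
      nlinarith [mul_le_mul_of_nonneg_left hδb h1γ.le]
    nlinarith

lemma ae_density {E : Set ℝ} {α : ℝ} (hα0 : 0 < α) (hα1 : α < 1) :
    ∀ᵐ y ∂(volume.restrict E), ∀ c, y < c → ∃ z, y < z ∧ z ≤ c ∧ α * (z - y) < mE E y z := by
  filter_upwards [Besicovitch.ae_tendsto_measure_inter_div volume E] with y hy
  intro c hc
  have hlt : ENNReal.ofReal ((1 + α) / 2) < 1 := by
    rw [← ENNReal.ofReal_one]
    exact ENNReal.ofReal_lt_ofReal_iff_of_nonneg (by linarith) |>.2 (by linarith)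
  have hev1 : ∀ᶠ r in nhdsWithin 0 (Set.Ioi (0:ℝ)),
      ENNReal.ofReal ((1 + α) / 2) <
        volume (E ∩ Metric.closedBall y r) / volume (Metric.closedBall y r) :=
    hy.eventually_const_lt hlt
  have hev2 : ∀ᶠ r in nhdsWithin 0 (Set.Ioi (0:ℝ)), (0:ℝ) < r :=
    eventually_mem_nhdsWithin
  have hev3 : ∀ᶠ r in nhdsWithin 0 (Set.Ioi (0:ℝ)), r < c - y :=
    eventually_nhdsWithin_of_eventually_nhds (eventually_lt_nhds (by linarith))
  obtain ⟨r, hr1, hr2, hr3⟩ := (hev1.and (hev2.and hev3)).exists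
  refine ⟨y + r, by linarith, by linarith, ?_⟩
  have hball : Metric.closedBall y r = Set.Icc (y - r) (y + r) := Real.closedBall_eq_Icc
  have hvball : volume (Metric.closedBall y r) = ENNReal.ofReal (2 * r) := by
    rw [hball, Real.volume_Icc]
    congr 1
    ring
  have hprod : ENNReal.ofReal ((1 + α) / 2) * volume (Metric.closedBall y r) <
      volume (E ∩ Metric.closedBall y r) := by
    refine (ENNReal.lt_div_iff_mul_lt ?_ ?_).1 hr1
    · left; rw [hvball]; simp [ENNReal.ofReal_eq_zero]; linarith
    · left; rw [hvball]; exact ENNReal.ofReal_ne_top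
  have hprodval : ENNReal.ofReal ((1 + α) / 2) * volume (Metric.closedBall y r)
      = ENNReal.ofReal (α * r) + ENNReal.ofReal r := by
    rw [hvball, ← ENNReal.ofReal_mul (by linarith), ← ENNReal.ofReal_add (by positivity) (by linarith)]
    congr 1
    ring
  have hsub : E ∩ Metric.closedBall y r ⊆ (E ∩ Set.Ioc y (y + r)) ∪ Set.Icc (y - r) y := by
    rw [hball]
    rintro t ⟨htE, ht1, ht2⟩
    rcases le_or_gt t y with h' | h'
    · exact Or.inr ⟨ht1, h'⟩
    · exact Or.inl ⟨htE, h', ht2⟩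
  have hmeas : volume (E ∩ Metric.closedBall y r)
      ≤ volume (E ∩ Set.Ioc y (y + r)) + ENNReal.ofReal r := by
    refine (measure_mono hsub).trans ((measure_union_le _ _).trans ?_)
    gcongr
    rw [Real.volume_Icc]
    exact ENNReal.ofReal_le_ofReal (by linarith)
  have hkey : ENNReal.ofReal (α * r) + ENNReal.ofReal r
      < volume (E ∩ Set.Ioc y (y + r)) + ENNReal.ofReal r := by
    calc ENNReal.ofReal (α * r) + ENNReal.ofReal r
        = ENNReal.ofReal ((1 + α) / 2) * volume (Metric.closedBall y r) := hprodval.symm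
      _ < volume (E ∩ Metric.closedBall y r) := hprod
      _ ≤ _ := hmeas
  have hfin : ENNReal.ofReal (α * r) < volume (E ∩ Set.Ioc y (y + r)) :=
    (ENNReal.add_lt_add_iff_right ENNReal.ofReal_ne_top).1 hkey
  have := (ENNReal.ofReal_lt_iff_lt_toReal (by positivity) (vol_ne_top E y (y + r))).1 hfin
  simpa [mE] using this

section KeyLemma

variable {E : Set ℝ} (hE : MeasurableSet E) {α : ℝ}

lemma key_lemma {E : Set ℝ} (hE : MeasurableSet E) {α : ℝ} (hα0 : 0 < α) (hα1 : α < 1)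
    {x b : ℝ} (hxb : x < b)
    (hx : ∀ z, x < z → mE E x z ≤ α * (z - x)) :
    mE E x b ≤ α * mE (halo α E) x b := by
  set F : ℝ → ℝ := fun y => mE E x y - α * (y - x) with hFdef
  have hFcont : Continuous F := by
    apply (continuous_mE E x).sub
    continuity
  set C : Set ℝ := {y | y ∈ Set.Icc x b ∧ ∀ z ∈ Set.Icc y b, F z ≤ F y} with hCdef
  have hCclosed : IsClosed C := by
    refine IsSeqClosed.isClosed ?_
    intro u y hu hlim
    refine ⟨isClosed_Icc.isSeqClosed (fun n => (hu n).1) hlim, ?_⟩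
    intro z hz
    rcases eq_or_lt_of_le hz.1 with rfl | hyz
    · exact le_rfl
    · have hev : ∀ᶠ n in Filter.atTop, u n < z :=
        hlim.eventually (eventually_lt_nhds hyz)
      have hFu : Filter.Tendsto (fun n => F (u n)) Filter.atTop (nhds (F y)) :=
        (hFcont.continuousAt.tendsto).comp hlim
      refine ge_of_tendsto hFu ?_
      filter_upwards [hev] with n hn
      exact (hu n).2 z ⟨hn.le, hz.2⟩
  have hFx : F x = 0 := by simp [hFdef, mE]
  have hxC : x ∈ C := by
    refine ⟨⟨le_rfl, hxb.le⟩, ?_⟩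
    intro z hz
    rw [hFx]
    rcases eq_or_lt_of_le hz.1 with rfl | hxz
    · rw [hFx]
    · have := hx z hxz
      simp only [hFdef]
      linarith
  have hbC : b ∈ C := by
    refine ⟨⟨hxb.le, le_rfl⟩, ?_⟩
    intro z hz
    have : z = b := le_antisymm hz.2 hz.1
    simp [this]
  set s : ℝ → ℝ := fun a => sInf (C ∩ Set.Ioc a b) with hsdef
  have hs_facts : ∀ a ∈ C, a < b →
      s a ∈ C ∧ a ≤ s a ∧ s a ≤ b ∧ mE E a (s a) ≤ α * (s a - a) ∧
        Set.Ioo a (s a) ∩ C = ∅ := by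
    intro a haC hab
    have hne : (C ∩ Set.Ioc a b).Nonempty := ⟨b, hbC, hab, le_rfl⟩
    have hbdd : BddBelow (C ∩ Set.Ioc a b) := ⟨a, fun c hc => hc.2.1.le⟩
    have hclos : s a ∈ closure (C ∩ Set.Ioc a b) := csInf_mem_closure hne hbdd
    have hsC : s a ∈ C := by
      have := closure_mono (Set.inter_subset_left) hclos
      rwa [hCclosed.closure_eq] at this
    have hsa : a ≤ s a := le_csInf hne (fun c hc => hc.2.1.le)
    have hsb : s a ≤ b := csInf_le hbdd ⟨hbC, hab, le_rfl⟩
    have hFsa : F (s a) ≤ F a := by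
      have hsubset : C ∩ Set.Ioc a b ⊆ {y | F y ≤ F a} := by
        rintro c ⟨hcC, hc1, hc2⟩
        exact haC.2 c ⟨hc1.le, hc2⟩
      have := closure_minimal hsubset (isClosed_le hFcont continuous_const)
      exact this hclos
    have hax : x ≤ a := haC.1.1
    have hEst : mE E a (s a) ≤ α * (s a - a) := by
      have hadd := mE_add hE hax hsa
      simp only [hFdef] at hFsa
      linarith
    have hnoC : Set.Ioo a (s a) ∩ C = ∅ := by
      rw [Set.eq_empty_iff_forall_notMem]
      rintro c ⟨⟨hc1, hc2⟩, hcC⟩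
      have : s a ≤ c := csInf_le hbdd ⟨hcC, hc1, hc2.le.trans hsb⟩
      exact absurd hc2 (not_lt.2 this)
    exact ⟨hsC, hsa, hsb, hEst, hnoC⟩
  set O : Set ℝ := Set.Ioo x b \ C with hOdef
  have hcover : ∀ y ∈ O, ∃ a, a ∈ C ∧ x ≤ a ∧ a < b ∧ y ∈ Set.Ioo a (s a) := by
    rintro y ⟨hyI, hyC⟩
    set a := sSup (C ∩ Set.Icc x y) with hadef
    have hclosed' : IsClosed (C ∩ Set.Icc x y) := hCclosed.inter isClosed_Icc
    have hne : (C ∩ Set.Icc x y).Nonempty := ⟨x, hxC, le_rfl, hyI.1.le⟩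
    have hbdd : BddAbove (C ∩ Set.Icc x y) := ⟨y, fun c hc => hc.2.2⟩
    have haMem : a ∈ C ∩ Set.Icc x y := hclosed'.csSup_mem hne hbdd
    have hay : a < y := lt_of_le_of_ne haMem.2.2 (fun h => hyC (h ▸ haMem.1))
    have hab : a < b := hay.trans hyI.2
    have hylt : y < s a := by
      have hyle : y ≤ s a := by
        refine le_csInf ⟨b, hbC, hab, le_rfl⟩ ?_
        intro c hc
        by_contra hcy
        push_neg at hcy
        have : c ≤ a := le_csSup hbdd ⟨hc.1, haMem.2.1.trans hc.2.1.le, hcy.le⟩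
        exact absurd hc.2.1 (not_lt.2 this)
      rcases eq_or_lt_of_le hyle with heq | h
      · exact absurd ((hs_facts a haMem.1 hab).1) (heq ▸ hyC)
      · exact h
    exact ⟨a, haMem.1, haMem.2.1, hab, hay, hylt⟩
  have hOH : O ⊆ halo α E := by
    rintro y ⟨hyI, hyC⟩
    have : ¬ (y ∈ Set.Icc x b ∧ ∀ z ∈ Set.Icc y b, F z ≤ F y) := hyC
    push_neg at this
    obtain ⟨z, hz, hFz⟩ := this ⟨hyI.1.le, hyI.2.le⟩
    have hyz : y < z := by
      rcases eq_or_lt_of_le hz.1 with rfl | h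
      · exact absurd le_rfl (not_le.2 hFz)
      · exact h
    refine (mem_halo_iff hE).2 ⟨z - y, by linarith, ?_⟩
    have hadd := mE_add hE (hyI.1.le : x ≤ y) hyz.le
    have : y + (z - y) = z := by ring
    rw [this]
    simp only [hFdef] at hFz
    linarith
  have hae := ae_density (E := E) hα0 hα1
  set P : ℝ → Prop := fun y => ∀ c, y < c → ∃ z, y < z ∧ z ≤ c ∧ α * (z - y) < mE E y z with hPdef
  have hN : volume ({y | ¬ P y} ∩ E) = 0 := by
    have h := (MeasureTheory.ae_iff).1 hae
    rwa [Measure.restrict_apply' hE] at h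
  have hsubE : E ∩ Set.Ioc x b ⊆ (E ∩ O) ∪ (({y | ¬ P y} ∩ E) ∪ {b}) := by
    rintro y ⟨hyE, hy1, hy2⟩
    rcases eq_or_lt_of_le hy2 with heq | hyb
    · exact Or.inr (Or.inr (Set.mem_singleton_iff.2 heq))
    · by_cases hyC : y ∈ C
      · refine Or.inr (Or.inl ⟨?_, hyE⟩)
        intro hP
        obtain ⟨z, hz1, hz2, hz3⟩ := hP b hyb
        have hadd := mE_add hE (hyC.1.1 : x ≤ y) hz1.le
        have h2 := hyC.2 z ⟨hz1.le, hz2⟩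
        simp only [hFdef] at h2
        linarith
      · exact Or.inl ⟨hyE, ⟨hy1, hyb⟩, hyC⟩
  have hvol1 : volume (E ∩ Set.Ioc x b) ≤ volume (E ∩ O) := by
    calc volume (E ∩ Set.Ioc x b)
        ≤ volume ((E ∩ O) ∪ (({y | ¬ P y} ∩ E) ∪ {b})) := measure_mono hsubE
      _ ≤ volume (E ∩ O) + volume (({y | ¬ P y} ∩ E) ∪ {b}) := measure_union_le _ _
      _ ≤ volume (E ∩ O) + (volume ({y | ¬ P y} ∩ E) + volume ({b} : Set ℝ)) := by
          gcongr
          exact measure_union_le _ _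
      _ = volume (E ∩ O) := by
          rw [hN]
          simp
  set A : Set ℝ := {a | a ∈ C ∧ x ≤ a ∧ a < b ∧ a < s a} with hAdef
  have hsep : ∀ a1 ∈ A, ∀ a2 ∈ A, a1 < a2 → s a1 ≤ a2 := by
    intro a1 _ a2 h2 hlt
    exact csInf_le ⟨a1, fun c hc => hc.2.1.le⟩ ⟨h2.1, hlt, h2.2.2.1.le⟩
  have hdisj : A.PairwiseDisjoint (fun a => Set.Ioo a (s a)) := by
    intro a1 h1 a2 h2 hne
    rcases hne.lt_or_gt with h | h
    · refine Set.disjoint_left.2 ?_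
      rintro t ⟨ht1, ht2⟩ ⟨ht3, ht4⟩
      exact absurd (ht2.trans_le (hsep a1 h1 a2 h2 h)) (not_lt.2 ht3.le)
    · refine Set.disjoint_left.2 ?_
      rintro t ⟨ht1, ht2⟩ ⟨ht3, ht4⟩
      exact absurd (ht4.trans_le (hsep a2 h2 a1 h1 h)) (not_lt.2 ht1.le)
  have hcount : A.Countable := hdisj.countable_of_Ioo (fun a ha => ha.2.2.2)
  have hcover2 : O ⊆ ⋃ a ∈ A, Set.Ioo a (s a) := by
    intro y hy
    obtain ⟨a, haC, hax, hab, hmem⟩ := hcover y hy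
    exact Set.mem_biUnion ⟨haC, hax, hab, hmem.1.trans hmem.2⟩ hmem
  have hIooO : ∀ a ∈ A, Set.Ioo a (s a) ⊆ O := by
    intro a ha t ht
    obtain ⟨hsC, hsa, hsb, _, hnoC⟩ := hs_facts a ha.1 ha.2.2.1
    refine ⟨⟨lt_of_le_of_lt ha.2.1 ht.1, lt_of_lt_of_le ht.2 hsb⟩, ?_⟩
    intro htC
    have : t ∈ Set.Ioo a (s a) ∩ C := ⟨ht, htC⟩
    rw [hnoC] at this
    exact this
  have hstep1 : volume (E ∩ O) ≤ ∑' a : A, volume (E ∩ Set.Ioo a.1 (s a.1)) := by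
    calc volume (E ∩ O) ≤ volume (⋃ a ∈ A, E ∩ Set.Ioo a (s a)) := by
          refine measure_mono ?_
          rintro t ⟨htE, htO⟩
          obtain ⟨a, ha, hmem⟩ := Set.mem_iUnion₂.1 (hcover2 htO)
          exact Set.mem_biUnion ha ⟨htE, hmem⟩
      _ ≤ ∑' a : A, volume (E ∩ Set.Ioo a.1 (s a.1)) :=
          measure_biUnion_le volume hcount _
  have hstep2 : ∀ a ∈ A, volume (E ∩ Set.Ioo a (s a)) ≤ ENNReal.ofReal (α * (s a - a)) := by
    intro a ha
    obtain ⟨_, hsa, hsb, hEst, _⟩ := hs_facts a ha.1 ha.2.2.1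
    calc volume (E ∩ Set.Ioo a (s a)) ≤ volume (E ∩ Set.Ioc a (s a)) :=
          measure_mono (Set.inter_subset_inter_right _ Set.Ioo_subset_Ioc_self)
      _ = ENNReal.ofReal (mE E a (s a)) := (ENNReal.ofReal_toReal (vol_ne_top _ _ _)).symm
      _ ≤ ENNReal.ofReal (α * (s a - a)) := ENNReal.ofReal_le_ofReal hEst
  have hstep3 : ∑' a : A, volume (E ∩ Set.Ioo a.1 (s a.1))
      ≤ ENNReal.ofReal α * volume (halo α E ∩ Set.Ioc x b) := by
    calc ∑' a : A, volume (E ∩ Set.Ioo a.1 (s a.1))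
        ≤ ∑' a : A, ENNReal.ofReal α * ENNReal.ofReal (s a.1 - a.1) := by
          refine ENNReal.tsum_le_tsum ?_
          intro a
          refine (hstep2 a.1 a.2).trans ?_
          rw [← ENNReal.ofReal_mul hα0.le]
      _ = ENNReal.ofReal α * ∑' a : A, ENNReal.ofReal (s a.1 - a.1) := ENNReal.tsum_mul_left
      _ ≤ ENNReal.ofReal α * volume (halo α E ∩ Set.Ioc x b) := by
          gcongr
          have hb2 := measure_biUnion (μ := volume) hcount hdisj (fun a _ => measurableSet_Ioo)
          calc ∑' a : A, ENNReal.ofReal (s a.1 - a.1)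
              = ∑' a : A, volume (Set.Ioo a.1 (s a.1)) := by
                congr 1
                funext a
                rw [Real.volume_Ioo]
            _ = volume (⋃ a ∈ A, Set.Ioo a (s a)) := hb2.symm
            _ ≤ volume (halo α E ∩ Set.Ioc x b) := by
                refine measure_mono (Set.iUnion₂_subset ?_)
                intro a ha t ht
                have htO := hIooO a ha ht
                exact ⟨hOH htO, htO.1.1, htO.1.2.le⟩
  have hfinal : volume (E ∩ Set.Ioc x b) ≤ ENNReal.ofReal α * volume (halo α E ∩ Set.Ioc x b) :=
    hvol1.trans (hstep1.trans hstep3)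
  have hmono := ENNReal.toReal_mono
    (ENNReal.mul_ne_top ENNReal.ofReal_ne_top (vol_ne_top _ _ _)) hfinal
  rwa [ENNReal.toReal_mul, ENNReal.toReal_ofReal hα0.le] at hmono

end KeyLemma

theorem stmt6 (E : Set ℝ) (hE : MeasurableSet E) (lam α : ℝ)
    (h0 : 0 < lam) (h1 : lam < α) (h2 : α < 1) :
    halo lam E ⊆ halo (lam / α) (halo α E) := by
  intro x hx
  have hα0 : 0 < α := h0.trans h1
  have hHopen : IsOpen (halo α E) := isOpen_halo hE hα0 h2
  have hHmeas : MeasurableSet (halo α E) := hHopen.measurableSet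
  obtain ⟨h, hpos, hlt⟩ := (mem_halo_iff hE).1 hx
  by_cases hxH : x ∈ halo α E
  · obtain ⟨δ, hδpos, hball⟩ := Metric.isOpen_iff.1 hHopen x hxH
    have hsub : Set.Ioc x (x + δ/2) ⊆ halo α E := by
      intro t ht
      apply hball
      rw [Metric.mem_ball, Real.dist_eq, abs_of_pos (by linarith [ht.1] : (0:ℝ) < t - x)]
      have := ht.2
      linarith
    have hm : mE (halo α E) x (x + δ/2) = δ/2 := by
      have heq : halo α E ∩ Set.Ioc x (x + δ/2) = Set.Ioc x (x + δ/2) :=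
        Set.inter_eq_self_of_subset_right hsub
      rw [mE, heq, Real.volume_Ioc]
      rw [show x + δ/2 - x = δ/2 by ring, ENNReal.toReal_ofReal (by positivity)]
    refine (mem_halo_iff hHmeas).2 ⟨δ/2, by positivity, ?_⟩
    rw [hm]
    have hlt1 : lam / α < 1 := (div_lt_one hα0).2 h1
    nlinarith
  · have hxall : ∀ z, x < z → mE E x z ≤ α * (z - x) := by
      intro z hz
      by_contra hcon
      push_neg at hcon
      refine hxH ((mem_halo_iff hE).2 ⟨z - x, by linarith, ?_⟩)
      rw [show x + (z - x) = z by ring]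
      exact hcon
    have hkey := key_lemma hE hα0 h2 (show x < x + h by linarith) hxall
    refine (mem_halo_iff hHmeas).2 ⟨h, hpos, ?_⟩
    have hcomb : lam * h < α * mE (halo α E) x (x + h) := hlt.trans_le hkey
    rw [div_mul_eq_mul_div, div_lt_iff₀ hα0]
    nlinarith
end

section
/- Let a < b < c be real numbers, E ⊆ (a,b) measurable with |E|/(c-b) < 1, and set E' = (a,c) \ E. Then for every x ∈ (a,c), M⁺1_{E'}(x) ≥ 1 - |E|/(c-b). In particular (a,c) ⊆ {x : M⁺1_{E'}(x) ≥ 1 - |E|/(c-b)}. -/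
open MeasureTheory Set

lemma aux_integ (s : Set ℝ) (hs : MeasurableSet s) (x y : ℝ) (hxy : x ≤ y) :
    ∫ t in x..y, |s.indicator (fun _ => (1:ℝ)) t| = (volume (Ioc x y ∩ s)).toReal := by
  have h1 : ∀ t, |s.indicator (fun _ => (1:ℝ)) t| = s.indicator (fun _ => (1:ℝ)) t := fun t =>
    abs_of_nonneg (Set.indicator_nonneg (fun _ _ => zero_le_one) t)
  simp_rw [h1]
  rw [intervalIntegral.integral_of_le hxy, MeasureTheory.setIntegral_indicator hs,
    MeasureTheory.setIntegral_const]
  simp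
  rfl

theorem stmt10 (a b c : ℝ) (hab : a < b) (hbc : b < c) (E : Set ℝ)
    (hE : MeasurableSet E) (hEsub : E ⊆ Ioo a b)
    (hsmall : (volume E).toReal / (c - b) < 1) :
    (∀ x ∈ Ioo a c,
      1 - (volume E).toReal / (c - b) ≤ Mplus ((Ioo a c \ E).indicator fun _ => (1:ℝ)) x) ∧
    Ioo a c ⊆ {x : ℝ |
      1 - (volume E).toReal / (c - b) ≤ Mplus ((Ioo a c \ E).indicator fun _ => (1:ℝ)) x} := by
  have hcb : (0:ℝ) < c - b := by linarith
  set μE : ℝ := (volume E).toReal with hμE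
  have hμE0 : 0 ≤ μE := ENNReal.toReal_nonneg
  have hEfin : volume E < ⊤ :=
    lt_of_le_of_lt (measure_mono hEsub) (by simp [Real.volume_Ioo])
  set s : Set ℝ := Ioo a c \ E with hsdef
  have hs : MeasurableSet s := measurableSet_Ioo.diff hE
  have main : ∀ x ∈ Ioo a c,
      1 - μE / (c - b) ≤ Mplus (s.indicator fun _ => (1:ℝ)) x := by
    intro x hx
    obtain ⟨hax, hxc⟩ := hx
    have hcx : (0:ℝ) < c - x := by linarith
    -- bounded above by 1
    have hbdd : BddAbove (Set.range fun h : {h : ℝ // 0 < h} =>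
        (h.1)⁻¹ * ∫ t in x..(x + h.1), |s.indicator (fun _ => (1:ℝ)) t|) := by
      refine ⟨1, ?_⟩
      rintro _ ⟨⟨h, hh⟩, rfl⟩
      simp only
      rw [aux_integ s hs x (x + h) (by linarith)]
      have hm : (volume (Ioc x (x + h) ∩ s)).toReal ≤ h := by
        refine ENNReal.toReal_le_of_le_ofReal hh.le ?_
        calc volume (Ioc x (x + h) ∩ s) ≤ volume (Ioc x (x + h)) :=
              measure_mono inter_subset_left
          _ = ENNReal.ofReal h := by simp [Real.volume_Ioc]
      calc (h)⁻¹ * (volume (Ioc x (x + h) ∩ s)).toReal ≤ h⁻¹ * h := by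
            exact mul_le_mul_of_nonneg_left hm (by positivity)
        _ = 1 := inv_mul_cancel₀ hh.ne'
    have hterm := le_ciSup hbdd ⟨c - x, hcx⟩
    rw [Mplus]
    refine le_trans ?_ hterm
    simp only
    have hxe : x + (c - x) = c := by ring
    rw [hxe, aux_integ s hs x c (by linarith)]
    have hset : Ioc x c ∩ s = Ioo x c \ E := by
      ext t
      simp only [hsdef, mem_inter_iff, mem_Ioc, mem_Ioo, mem_diff]
      constructor
      · rintro ⟨⟨h1, _⟩, ⟨_, h3⟩, h4⟩; exact ⟨⟨h1, h3⟩, h4⟩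
      · rintro ⟨⟨h1, h2⟩, h4⟩; exact ⟨⟨h1, h2.le⟩, ⟨hax.trans h1, h2⟩, h4⟩
    rw [hset]
    set m : ℝ := (volume (Ioo x c ∩ E)).toReal with hm
    have hmfin : volume (Ioo x c ∩ E) < ⊤ :=
      lt_of_le_of_lt (measure_mono inter_subset_right) hEfin
    have hdfin : volume (Ioo x c \ E) < ⊤ :=
      lt_of_le_of_lt (measure_mono diff_subset) (by simp [Real.volume_Ioo])
    have hsum : volume (Ioo x c \ E) + volume (Ioo x c ∩ E) = volume (Ioo x c) :=
      measure_diff_add_inter _ hE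
    have hsumR : (volume (Ioo x c \ E)).toReal + m = c - x := by
      have := congrArg ENNReal.toReal hsum
      rwa [ENNReal.toReal_add hdfin.ne hmfin.ne, Real.volume_Ioo,
        ENNReal.toReal_ofReal hcx.le] at this
    have hmle : m ≤ μE := ENNReal.toReal_mono hEfin.ne (measure_mono inter_subset_right)
    have hm0 : 0 ≤ m := ENNReal.toReal_nonneg
    have hdval : (volume (Ioo x c \ E)).toReal = (c - x) - m := by linarith
    rw [hdval]
    -- key inequality: m/(c-x) ≤ μE/(c-b)
    have hkey : m / (c - x) ≤ μE / (c - b) := by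
      rcases le_or_gt x b with hxb | hbx
      · exact div_le_div₀ hμE0 hmle hcb (by linarith)
      · have : Ioo x c ∩ E = ∅ := by
          ext t
          simp only [mem_inter_iff, mem_Ioo, mem_empty_iff_false, iff_false, not_and]
          rintro ⟨h1, _⟩ htE
          exact absurd (hEsub htE).2 (by linarith)
        have : m = 0 := by rw [hm, this]; simp
        rw [this, zero_div]
        positivity
    have : (c - x)⁻¹ * ((c - x) - m) = 1 - m / (c - x) := by
      field_simp
    rw [this]
    linarith
  exact ⟨main, fun x hx => main x hx⟩
end
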